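/- If κ is an uncountable cardinal, then every class 𝒞 of structures of a fixed type τ ∈ H_κ that is Σ₁-definable with parameters in H_κ reflects below κ: for every B ∈ 𝒞 there is A ∈ 𝒞 ∩ H_κ and an elementary embedding of A into B. -/

import Mathlib

/-!  Common framework: the language of set theory, Lévy hierarchy,
Σₙ-elementarity of classes of `ZFSet`s, cumulative hierarchy, etc. -/

open FirstOrder

/-- The language of set theory: a single binary relation symbol (membership). -/
def LSet : FirstOrder.Language where
  Functions _ := Empty
  Relations n := match n with
    | 2 => Unit
    | _ => Empty

/-- `V` (the universe of ZFC sets) as an `LSet`-structure. -/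
noncomputable instance : LSet.Structure ZFSet where
  funMap := fun f _ => f.elim
  RelMap := fun {n} r xs => match n, r, xs with
    | 2, _, xs => xs 0 ∈ xs 1
    | 0, r, _ => r.elim
    | 1, r, _ => r.elim
    | _+3, r, _ => r.elim

/-- Any class of sets as an `LSet`-structure, with the inherited membership relation. -/
noncomputable instance (S : Set ZFSet) : LSet.Structure S where
  funMap := fun f _ => f.elim
  RelMap := fun {n} r xs => match n, r, xs with
    | 2, _, xs => (xs 0 : ZFSet) ∈ (xs 1 : ZFSet)
    | 0, r, _ => r.elim
    | 1, r, _ => r.elim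
    | _+3, r, _ => r.elim

mutual
  /-- The Σₙ formulas of the Lévy-style prenex hierarchy. -/
  inductive IsSigmaFml : ℕ → ∀ {k : ℕ}, LSet.BoundedFormula Empty k → Prop
    | of_qf {k} {φ : LSet.BoundedFormula Empty k} : φ.IsQF → IsSigmaFml 0 φ
    | of_pi {n k} {φ : LSet.BoundedFormula Empty k} : IsPiFml n φ → IsSigmaFml (n+1) φ
    | ex {n k} {φ : LSet.BoundedFormula Empty (k+1)} :
        IsSigmaFml (n+1) φ → IsSigmaFml (n+1) φ.ex
  /-- The Πₙ formulas of the Lévy-style prenex hierarchy. -/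
  inductive IsPiFml : ℕ → ∀ {k : ℕ}, LSet.BoundedFormula Empty k → Prop
    | of_qf {k} {φ : LSet.BoundedFormula Empty k} : φ.IsQF → IsPiFml 0 φ
    | of_sigma {n k} {φ : LSet.BoundedFormula Empty k} : IsSigmaFml n φ → IsPiFml (n+1) φ
    | all {n k} {φ : LSet.BoundedFormula Empty (k+1)} :
        IsPiFml (n+1) φ → IsPiFml (n+1) φ.all
end

/-- Satisfaction of a formula (with `k` parameters) in `V`. -/
def SatV {k : ℕ} (φ : LSet.BoundedFormula Empty k) (xs : Fin k → ZFSet) : Prop :=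
  φ.Realize (fun e => e.elim) xs

/-- Satisfaction of a formula (with `k` parameters) in a class `S` of sets. -/
def SatIn (S : Set ZFSet) {k : ℕ} (φ : LSet.BoundedFormula Empty k) (xs : Fin k → S) : Prop :=
  φ.Realize (fun e => e.elim) xs

/-- `S ≼ₙ V` : Σₙ formulas with parameters in `S` are absolute between `S` and `V`. -/
def SigmaElementary (n : ℕ) (S : Set ZFSet) : Prop :=
  ∀ {k : ℕ} (φ : LSet.BoundedFormula Empty k), IsSigmaFml n φ →
    ∀ xs : Fin k → S, (SatIn S φ xs ↔ SatV φ (fun i => (xs i : ZFSet)))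

/-- The cumulative hierarchy `V_α`, as the class of sets of rank `< α`. -/
def Vset (α : Ordinal) : Set ZFSet := {x | x.rank < α}

universe u

/-- `H_κ`: the class of sets hereditarily of cardinality `< κ`. -/
def Hset (κ : Cardinal.{u}) : Set ZFSet.{u} :=
  {x | ∃ t : ZFSet, t.IsTransitive ∧ x ⊆ t ∧ Cardinal.mk t.toSet < Cardinal.lift.{u+1} κ}

/-- The class `C⁽ⁿ⁾ = {α : V_α ≼ₙ V}`. -/
def Cclass (n : ℕ) : Set Ordinal := {α | SigmaElementary n (Vset α)}

/-- `x` is a (von Neumann) ordinal: a transitive set of transitive sets. -/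
def ZFOrd (x : ZFSet) : Prop := x.IsTransitive ∧ ∀ y ∈ x, ZFSet.IsTransitive y

/-- A transitive class of sets. -/
def TransClass (M : Set ZFSet) : Prop := ∀ x ∈ M, ∀ y, y ∈ x → y ∈ M

/-- `j` is an elementary embedding of `V` into the class `M`. -/
structure ElemEmbV (M : Set ZFSet) (j : ZFSet → ZFSet) : Prop where
  maps : ∀ x, j x ∈ M
  elem : ∀ {k : ℕ} (φ : LSet.BoundedFormula Empty k) (xs : Fin k → ZFSet),
    SatV φ xs ↔ SatIn M φ (fun i => ⟨j (xs i), maps (xs i)⟩)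

/-- `j` is an elementary embedding of the class `S` into the class `T`. -/
structure ElemEmbBetween (S T : Set ZFSet) (j : ZFSet → ZFSet) : Prop where
  maps : ∀ x ∈ S, j x ∈ T
  elem : ∀ {k : ℕ} (φ : LSet.BoundedFormula Empty k) (xs : Fin k → ZFSet) (h : ∀ i, xs i ∈ S),
    SatIn S φ (fun i => ⟨xs i, h i⟩) ↔ SatIn T φ (fun i => ⟨j (xs i), maps _ (h i)⟩)

/-- `κ` is the critical point of `j`: `j` fixes all ordinals `< κ` and moves `κ`. -/
def IsCritPt (j : ZFSet → ZFSet) (κ : ZFSet) : Prop :=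
  ZFOrd κ ∧ (∀ x, x ∈ κ → j x = x) ∧ j κ ≠ κ

/-- An ultrafilter on (all subsets of) the set `base`. -/
structure ZFUltra (base : ZFSet) where
  sets : Set ZFSet
  sub : ∀ X ∈ sets, X ⊆ base
  base_mem : base ∈ sets
  empty_not_mem : (∅ : ZFSet) ∉ sets
  upward : ∀ X ∈ sets, ∀ Y, Y ⊆ base → X ⊆ Y → Y ∈ sets
  ultra : ∀ X, X ⊆ base → (X ∈ sets ∨ ZFSet.sep (fun y => y ∉ X) base ∈ sets)

/-- `κ`-completeness: any family of fewer than `|κ|` many members has its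
intersection (with the base) in the ultrafilter. -/
def ZFUltra.Complete {b : ZFSet} (κ : ZFSet) (U : ZFUltra b) : Prop :=
  ∀ F : Set ZFSet, F ⊆ U.sets → Cardinal.mk F < Cardinal.mk κ.toSet →
    ZFSet.sep (fun x => ∀ X ∈ F, x ∈ X) b ∈ U.sets

/-- Nonprincipality: the complement of every singleton is in the ultrafilter. -/
def ZFUltra.Nonprincipal {b : ZFSet} (U : ZFUltra b) : Prop :=
  ∀ x, ZFSet.sep (fun y => y ≠ x) b ∈ U.sets

/-- Normality for an ultrafilter on an ordinal `κ`: closure under diagonal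
intersections. -/
def ZFUltra.NormalOn (κ : ZFSet) (U : ZFUltra κ) : Prop :=
  ∀ A : ZFSet → ZFSet, (∀ α ∈ κ, A α ∈ U.sets) →
    ZFSet.sep (fun α => ∀ β ∈ α, α ∈ A β) κ ∈ U.sets

/-- `P_κ(γ)`: the set of subsets of `γ` of cardinality `< |κ|`. -/
noncomputable def Pkappa (κ γ : ZFSet) : ZFSet :=
  ZFSet.sep (fun x => Cardinal.mk x.toSet < Cardinal.mk κ.toSet) (ZFSet.powerset γ)

/-- Fineness for an ultrafilter on `P_κ(γ)`. -/
def ZFUltra.Fine (κ γ : ZFSet) (U : ZFUltra (Pkappa κ γ)) : Prop :=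
  ∀ a ∈ γ, ZFSet.sep (fun x => a ∈ x) (Pkappa κ γ) ∈ U.sets

/-- Normality for an ultrafilter on `P_κ(γ)`: closure under diagonal intersections. -/
def ZFUltra.NormalP (κ γ : ZFSet) (U : ZFUltra (Pkappa κ γ)) : Prop :=
  ∀ A : ZFSet → ZFSet, (∀ a ∈ γ, A a ∈ U.sets) →
    ZFSet.sep (fun x => ∀ a ∈ x, x ∈ A a) (Pkappa κ γ) ∈ U.sets

/-- `κ` is `γ`-supercompact: there is a `κ`-complete fine normal ultrafilter on `P_κ(γ)`. -/
def GammaSupercompact (κ γ : ZFSet) : Prop :=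
  ∃ U : ZFUltra (Pkappa κ γ), U.Complete κ ∧ U.Fine κ γ ∧ U.NormalP κ γ

/-- `κ` is supercompact. -/
def Supercompact (κ : ZFSet) : Prop :=
  ZFOrd κ ∧ ∀ γ : ZFSet, ZFOrd γ → GammaSupercompact κ γ

/-- `κ` is measurable: it carries a `κ`-complete nonprincipal ultrafilter. -/
def ZFMeasurable (κ : ZFSet) : Prop :=
  ZFOrd κ ∧ ∃ U : ZFUltra κ, U.Complete κ ∧ U.Nonprincipal

/-- `κ` is `λ`-strong. -/
def LambdaStrong (κ : ZFSet) (lam : Ordinal) : Prop :=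
  ∃ (M : Set ZFSet) (j : ZFSet → ZFSet), TransClass M ∧ ElemEmbV M j ∧ IsCritPt j κ ∧
    lam < (j κ).rank ∧ (∀ x, x.rank < lam → x ∈ M)

/-- `κ` is `λ`-`C⁽ⁿ⁾`-strong. -/
def LambdaCnStrong (n : ℕ) (κ : ZFSet) (lam : Ordinal) : Prop :=
  ∃ (M : Set ZFSet) (j : ZFSet → ZFSet), TransClass M ∧ ElemEmbV M j ∧ IsCritPt j κ ∧
    lam < (j κ).rank ∧ (∀ x, x.rank < lam → x ∈ M) ∧ (j κ).rank ∈ Cclass n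

/-- `κ` is superstrong. -/
def Superstrong (κ : ZFSet) : Prop :=
  ∃ (M : Set ZFSet) (j : ZFSet → ZFSet), TransClass M ∧ ElemEmbV M j ∧ IsCritPt j κ ∧
    (∀ x, x.rank < (j κ).rank → x ∈ M)

/-- `κ` is `C⁽ⁿ⁾`-superstrong. -/
def CnSuperstrong (n : ℕ) (κ : ZFSet) : Prop :=
  ∃ (M : Set ZFSet) (j : ZFSet → ZFSet), TransClass M ∧ ElemEmbV M j ∧ IsCritPt j κ ∧
    (∀ x, x.rank < (j κ).rank → x ∈ M) ∧ (j κ).rank ∈ Cclass n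

/-- `κ` is `λ`-`C⁽ⁿ⁾`-extendible. -/
def LamCnExtendible (n : ℕ) (κ : ZFSet) (lam : Ordinal) : Prop :=
  ∃ (μ : Ordinal) (j : ZFSet → ZFSet), ElemEmbBetween (Vset lam) (Vset μ) j ∧
    IsCritPt j κ ∧ lam < (j κ).rank ∧ (j κ).rank ∈ Cclass n

/-- `κ` is `C⁽ⁿ⁾`-extendible. -/
def CnExtendible (n : ℕ) (κ : ZFSet) : Prop :=
  ∀ lam : Ordinal, κ.rank < lam → LamCnExtendible n κ lam

/-- `κ` is extendible. -/
def Extendible (κ : ZFSet) : Prop :=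
  ∀ lam : Ordinal, κ.rank < lam →
    ∃ (μ : Ordinal) (j : ZFSet → ZFSet), ElemEmbBetween (Vset lam) (Vset μ) j ∧
      IsCritPt j κ ∧ lam < (j κ).rank
/-- The language of set theory with one additional unary relation symbol. -/
def L2 : FirstOrder.Language where
  Functions _ := Empty
  Relations n := match n with
    | 1 => Unit
    | 2 => Unit
    | _ => Empty

/-- A structure for `L2` coded by sets: a domain, a binary relation (a set of
ordered pairs) and a unary predicate (a subset of the domain). -/
structure PreStruct where
  dom : ZFSet
  rel : ZFSet
  un : ZFSet

/-- The set coding a `PreStruct`. -/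
noncomputable def PreStruct.code (A : PreStruct) : ZFSet :=
  ZFSet.pair A.dom (ZFSet.pair A.rel A.un)

/-- The `L2`-structure on the domain of a `PreStruct`. -/
noncomputable def L2Str (A : PreStruct) : L2.Structure (↥A.dom.toSet) where
  funMap := fun f _ => f.elim
  RelMap := fun {n} r xs => match n, r, xs with
    | 1, _, xs => (xs 0 : ZFSet) ∈ A.un
    | 2, _, xs => ZFSet.pair (xs 0 : ZFSet) (xs 1 : ZFSet) ∈ A.rel
    | 0, r, _ => r.elim
    | _+3, r, _ => r.elim

/-- Satisfaction in a coded structure. -/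
def SatStruct (A : PreStruct) {k : ℕ} (φ : L2.BoundedFormula Empty k)
    (xs : Fin k → ↥A.dom.toSet) : Prop :=
  @FirstOrder.Language.BoundedFormula.Realize L2 _ (L2Str A) Empty k φ (fun e => e.elim) xs

/-- `e` is an elementary embedding of the coded structure `A` into `B`. -/
structure StructEmb (A B : PreStruct) (e : ZFSet → ZFSet) : Prop where
  maps : ∀ x ∈ A.dom, e x ∈ B.dom
  elem : ∀ {k : ℕ} (φ : L2.BoundedFormula Empty k) (xs : Fin k → ZFSet)
      (h : ∀ i, xs i ∈ A.dom),
    SatStruct A φ (fun i => ⟨xs i, h i⟩) ↔ SatStruct B φ (fun i => ⟨e (xs i), maps _ (h i)⟩)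

/-- `A` is elementarily embeddable into `B`. -/
def ElemEmbeddable (A B : PreStruct) : Prop := ∃ e : ZFSet → ZFSet, StructEmb A B e


/-! ### Auxiliary: Mostowski collapse of a class along `N` -/

open FirstOrder

noncomputable def clps (N : Set ZFSet) (x : ZFSet) : ZFSet :=
  @ZFSet.image (fun y => if h : y.rank < x.rank then clps N y else ∅)
    (Classical.allZFSetDefinable _) (ZFSet.sep (· ∈ N) x)
termination_by x.rank
decreasing_by all_goals exact h

theorem mem_clps {N : Set ZFSet} {x z : ZFSet} :
    z ∈ clps N x ↔ ∃ y, y ∈ x ∧ y ∈ N ∧ clps N y = z := by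
  rw [clps, @ZFSet.mem_image _ (Classical.allZFSetDefinable _)]
  constructor
  · rintro ⟨w, hw, rfl⟩
    rw [ZFSet.mem_sep] at hw
    exact ⟨w, hw.1, hw.2, by rw [dif_pos (ZFSet.rank_lt_of_mem hw.1)]⟩
  · rintro ⟨y, hy, hyN, rfl⟩
    exact ⟨y, ZFSet.mem_sep.2 ⟨hy, hyN⟩, by rw [dif_pos (ZFSet.rank_lt_of_mem hy)]⟩

theorem clps_mem_of {N : Set ZFSet} {x y : ZFSet} (hy : y ∈ x) (hyN : y ∈ N) :
    clps N y ∈ clps N x :=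
  mem_clps.2 ⟨y, hy, hyN, rfl⟩

/-- Extensionality of `N`. -/
def ExtCl (N : Set ZFSet) : Prop :=
  ∀ x ∈ N, ∀ y ∈ N, x ≠ y → ∃ z ∈ N, (z ∈ x ∧ z ∉ y) ∨ (z ∈ y ∧ z ∉ x)

theorem clps_inj {N : Set ZFSet} (hext : ExtCl N) :
    ∀ x ∈ N, ∀ y ∈ N, clps N x = clps N y → x = y := by
  have key : ∀ o : Ordinal, ∀ x y : ZFSet, x.rank + y.rank ≤ o →
      x ∈ N → y ∈ N → clps N x = clps N y → x = y := by
    intro o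
    induction o using Ordinal.induction with
    | h o IH =>
      intro x y hr hx hy he
      by_contra hne
      obtain ⟨z, hzN, hz⟩ := hext x hx y hy hne
      rcases hz with ⟨hzx, hzy⟩ | ⟨hzy, hzx⟩
      · have h1 : clps N z ∈ clps N y := he ▸ clps_mem_of hzx hzN
        obtain ⟨w, hwy, hwN, hwz⟩ := mem_clps.1 h1
        have hlt : z.rank + w.rank < x.rank + y.rank := by
          calc z.rank + w.rank < z.rank + y.rank := by
                exact add_lt_add_right (ZFSet.rank_lt_of_mem hwy) _
            _ ≤ x.rank + y.rank := by
                exact add_le_add_left (ZFSet.rank_lt_of_mem hzx).le _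
        have := IH _ (lt_of_lt_of_le hlt hr) z w le_rfl hzN hwN hwz.symm
        exact hzy (this ▸ hwy)
      · have h1 : clps N z ∈ clps N x := he ▸ clps_mem_of hzy hzN
        obtain ⟨w, hwx, hwN, hwz⟩ := mem_clps.1 h1
        have hlt : w.rank + z.rank < x.rank + y.rank := by
          calc w.rank + z.rank < w.rank + y.rank := by
                exact add_lt_add_right (ZFSet.rank_lt_of_mem hzy) _
            _ ≤ x.rank + y.rank := by
                exact add_le_add_left (ZFSet.rank_lt_of_mem hwx).le _
        have := IH _ (lt_of_lt_of_le hlt hr) w z le_rfl hwN hzN hwz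
        exact hzx (this ▸ hwx)
  exact fun x hx y hy => key (x.rank + y.rank) x y le_rfl hx hy

theorem clps_mem_iff {N : Set ZFSet} (hext : ExtCl N) {x y : ZFSet}
    (hx : x ∈ N) (hy : y ∈ N) : clps N y ∈ clps N x ↔ y ∈ x := by
  refine ⟨fun h => ?_, fun h => clps_mem_of h hy⟩
  obtain ⟨w, hwx, hwN, hwz⟩ := mem_clps.1 h
  exact (clps_inj hext w hwN y hy hwz) ▸ hwx

theorem clps_fix {N : Set ZFSet} {t : ZFSet} (htr : t.IsTransitive)
    (htN : t.toSet ⊆ N) : ∀ x : ZFSet, x ⊆ t → clps N x = x := by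
  have key : ∀ o : Ordinal, ∀ x : ZFSet, x.rank ≤ o → x ⊆ t → clps N x = x := by
    intro o
    induction o using Ordinal.induction with
    | h o IH =>
      intro x hr hxt
      apply ZFSet.ext
      intro z
      rw [mem_clps]
      constructor
      · rintro ⟨y, hyx, _, rfl⟩
        rw [IH _ (lt_of_lt_of_le (ZFSet.rank_lt_of_mem hyx) hr) y le_rfl
          (htr.subset_of_mem (hxt hyx))]
        exact hyx
      · intro hz
        refine ⟨z, hz, htN (hxt hz), ?_⟩
        rw [IH _ (lt_of_lt_of_le (ZFSet.rank_lt_of_mem hz) hr) z le_rfl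
          (htr.subset_of_mem (hxt hz))]
  exact fun x hx => key x.rank x le_rfl hx

/-- Closure of `N` under unordered pairs. -/
def PairCl (N : Set ZFSet) : Prop := ∀ x ∈ N, ∀ y ∈ N, ({x, y} : ZFSet) ∈ N

theorem upair_self (x : ZFSet) : ({x, x} : ZFSet) = ({x} : ZFSet) := by
  apply ZFSet.ext; intro z
  simp [ZFSet.mem_pair]

theorem singletonN {N : Set ZFSet} (hpair : PairCl N) {x : ZFSet} (hx : x ∈ N) :
    ({x} : ZFSet) ∈ N := upair_self x ▸ hpair x hx x hx

theorem pairN {N : Set ZFSet} (hpair : PairCl N) {x y : ZFSet} (hx : x ∈ N) (hy : y ∈ N) :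
    ZFSet.pair x y ∈ N :=
  hpair _ (singletonN hpair hx) _ (hpair x hx y hy)

theorem clps_upair {N : Set ZFSet} {x y : ZFSet} (hx : x ∈ N) (hy : y ∈ N) :
    clps N ({x, y} : ZFSet) = ({clps N x, clps N y} : ZFSet) := by
  apply ZFSet.ext; intro z
  rw [mem_clps, ZFSet.mem_pair]
  constructor
  · rintro ⟨w, hw, _, rfl⟩
    rcases ZFSet.mem_pair.1 hw with rfl | rfl
    · exact Or.inl rfl
    · exact Or.inr rfl
  · rintro (rfl | rfl)
    · exact ⟨x, ZFSet.mem_pair.2 (Or.inl rfl), hx, rfl⟩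
    · exact ⟨y, ZFSet.mem_pair.2 (Or.inr rfl), hy, rfl⟩

theorem clps_singleton {N : Set ZFSet} {x : ZFSet} (hx : x ∈ N) :
    clps N ({x} : ZFSet) = ({clps N x} : ZFSet) := by
  rw [← upair_self, clps_upair hx hx, upair_self]

theorem clps_pair {N : Set ZFSet} (hpair : PairCl N) {x y : ZFSet} (hx : x ∈ N) (hy : y ∈ N) :
    clps N (ZFSet.pair x y) = ZFSet.pair (clps N x) (clps N y) := by
  show clps N ({{x},{x,y}} : ZFSet) = ({{clps N x},{clps N x, clps N y}} : ZFSet)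
  rw [clps_upair (singletonN hpair hx) (hpair x hx y hy), clps_singleton hx, clps_upair hx hy]

/-- The collapsed class is transitive. -/
theorem clps_transCl (N : Set ZFSet) : TransClass (clps N '' N) := by
  rintro x ⟨w, hwN, rfl⟩ y hy
  obtain ⟨v, _, hvN, rfl⟩ := mem_clps.1 hy
  exact ⟨v, hvN, rfl⟩

/-! ### Absoluteness lemmas -/

theorem LSet_term_eq : ∀ {k : ℕ} (t : LSet.Term (Empty ⊕ Fin k)),
    ∃ i : Fin k, t = FirstOrder.Language.Term.var (Sum.inr i) := by
  intro k t
  cases t with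
  | var v =>
    cases v with
    | inl e => exact e.elim
    | inr i => exact ⟨i, rfl⟩
  | func f ts => exact f.elim

theorem relMap_V (r : LSet.Relations 2) (v : Fin 2 → ZFSet) :
    Language.Structure.RelMap (L := LSet) (M := ZFSet) r v ↔ v 0 ∈ v 1 := Iff.rfl

theorem relMap_S (S : Set ZFSet) (r : LSet.Relations 2) (v : Fin 2 → S) :
    Language.Structure.RelMap (L := LSet) (M := S) r v ↔ (v 0 : ZFSet) ∈ (v 1 : ZFSet) := Iff.rfl

theorem qf_abs (S : Set ZFSet) : ∀ {k : ℕ} {ψ : LSet.BoundedFormula Empty k}, ψ.IsQF →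
    ∀ xs : Fin k → S, (SatIn S ψ xs ↔ SatV ψ (fun i => (xs i : ZFSet))) := by
  intro k ψ h
  induction h with
  | falsum => intro xs; exact Iff.rfl
  | of_isAtomic h =>
    cases h with
    | equal t₁ t₂ =>
      intro xs
      obtain ⟨i₁, rfl⟩ := LSet_term_eq t₁
      obtain ⟨i₂, rfl⟩ := LSet_term_eq t₂
      show (xs i₁ = xs i₂) ↔ ((xs i₁ : ZFSet) = (xs i₂ : ZFSet))
      exact Subtype.ext_iff
    | @rel l R ts =>
      match l, R with
      | 0, R => exact R.elim
      | 1, R => exact R.elim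
      | (l+3), R => exact R.elim
      | 2, R =>
        intro xs
        obtain ⟨i₁, h₁⟩ := LSet_term_eq (ts 0)
        obtain ⟨i₂, h₂⟩ := LSet_term_eq (ts 1)
        have hts : ts = ![Language.Term.var (Sum.inr i₁), Language.Term.var (Sum.inr i₂)] := by
          funext i
          fin_cases i
          · exact h₁
          · exact h₂
        subst hts
        exact Iff.rfl
  | imp h₁ h₂ ih₁ ih₂ =>
    intro xs
    exact imp_congr (ih₁ xs) (ih₂ xs)

theorem coe_snoc {S : Set ZFSet} {k : ℕ} (xs : Fin k → S) (a : S) :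
    (fun i => ((Fin.snoc xs a : Fin (k+1) → S) i : ZFSet))
      = Fin.snoc (fun i => (xs i : ZFSet)) (a : ZFSet) := by
  funext i
  cases i using Fin.lastCases with
  | last => simp
  | cast i => simp

theorem snoc_subtype (S : Set ZFSet) {k : ℕ} (xs : Fin k → ZFSet) (a : ZFSet)
    (h : ∀ i, (Fin.snoc xs a : Fin (k+1) → ZFSet) i ∈ S) (hxs : ∀ i, xs i ∈ S) (ha : a ∈ S) :
    (fun i => (⟨(Fin.snoc xs a : Fin (k+1) → ZFSet) i, h i⟩ : S)) = Fin.snoc (fun i => ⟨xs i, hxs i⟩) ⟨a, ha⟩ := by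
  funext i
  cases i using Fin.lastCases with
  | last => apply Subtype.ext; simp
  | cast i => apply Subtype.ext; simp

theorem sigma1_up (S : Set ZFSet) {k : ℕ} {ψ : LSet.BoundedFormula Empty k}
    (h : IsSigmaFml 1 ψ) :
    ∀ xs : Fin k → S, SatIn S ψ xs → SatV ψ (fun i => (xs i : ZFSet)) := by
  refine @IsSigmaFml.rec
    (motive_1 := fun n k ψ _ => n = 1 →
      ∀ xs : Fin k → S, SatIn S ψ xs → SatV ψ (fun i => (xs i : ZFSet)))
    (motive_2 := fun n k ψ _ => n = 0 → ψ.IsQF)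
    ?_ ?_ ?_ ?_ ?_ ?_ 1 k ψ h rfl
  · intro k φ hqf h1; cases h1
  · intro n k φ hpi ih h1 xs hs
    exact (qf_abs S (ih (by omega)) xs).1 hs
  · intro n k φ hsig ih h1 xs hs
    simp only [SatIn, Language.BoundedFormula.realize_ex] at hs
    obtain ⟨a, ha⟩ := hs
    simp only [SatV, Language.BoundedFormula.realize_ex]
    refine ⟨(a : ZFSet), ?_⟩
    have := ih h1 (Fin.snoc xs a) ha
    rwa [coe_snoc] at this
  · intro k φ hqf _; exact hqf
  · intro n k φ _ _ h0; cases h0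
  · intro n k φ _ _ h0; cases h0

theorem sigma1_down {k : ℕ} {ψ : LSet.BoundedFormula Empty k} (h : IsSigmaFml 1 ψ) :
    ∀ xs : Fin k → ZFSet, SatV ψ xs → ∃ l : List ZFSet, ∀ S : Set ZFSet,
      (∀ y ∈ l, y ∈ S) → ∀ hxs : ∀ i, xs i ∈ S, SatIn S ψ (fun i => ⟨xs i, hxs i⟩) := by
  refine @IsSigmaFml.rec
    (motive_1 := fun n k ψ _ => n = 1 →
      ∀ xs : Fin k → ZFSet, SatV ψ xs → ∃ l : List ZFSet, ∀ S : Set ZFSet,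
        (∀ y ∈ l, y ∈ S) → ∀ hxs : ∀ i, xs i ∈ S, SatIn S ψ (fun i => ⟨xs i, hxs i⟩))
    (motive_2 := fun n k ψ _ => n = 0 → ψ.IsQF)
    ?_ ?_ ?_ ?_ ?_ ?_ 1 k ψ h rfl
  · intro k φ hqf h1; cases h1
  · intro n k φ hpi ih h1 xs hs
    refine ⟨[], fun S _ hxs => ?_⟩
    exact (qf_abs S (ih (by omega)) _).2 hs
  · intro n k φ hsig ih h1 xs hs
    simp only [SatV, Language.BoundedFormula.realize_ex] at hs
    obtain ⟨a, ha⟩ := hs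
    obtain ⟨l, hl⟩ := ih h1 (Fin.snoc xs a) ha
    refine ⟨a :: l, fun S hS hxs => ?_⟩
    simp only [SatIn, Language.BoundedFormula.realize_ex]
    have haS : a ∈ S := hS a List.mem_cons_self
    have h' : ∀ i, (Fin.snoc xs a : Fin (k+1) → ZFSet) i ∈ S := by
      intro i
      cases i using Fin.lastCases with
      | last => simpa using haS
      | cast i => simpa using hxs i
    refine ⟨⟨a, haS⟩, ?_⟩
    have := hl S (fun y hy => hS y (List.mem_cons_of_mem a hy)) h'
    rwa [snoc_subtype S xs a h' hxs haS] at this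
  · intro k φ hqf _; exact hqf
  · intro n k φ _ _ h0; cases h0
  · intro n k φ _ _ h0; cases h0

theorem comp_snoc_subtype {S : Set ZFSet} (g : ZFSet → ZFSet) {k : ℕ} (xs : Fin k → ZFSet)
    (a : ZFSet) (h : ∀ i, g ((Fin.snoc xs a : Fin (k+1) → ZFSet) i) ∈ S)
    (hxs : ∀ i, g (xs i) ∈ S) (hA : g a ∈ S) :
    (fun i => (⟨g ((Fin.snoc xs a : Fin (k+1) → ZFSet) i), h i⟩ : S))
      = Fin.snoc (fun i => ⟨g (xs i), hxs i⟩) ⟨g a, hA⟩ := by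
  funext i
  cases i using Fin.lastCases with
  | last => apply Subtype.ext; simp
  | cast i => apply Subtype.ext; simp

theorem clps_realize {N : Set ZFSet} (hext : ExtCl N) :
    ∀ {k : ℕ} (ψ : LSet.BoundedFormula Empty k) (xs : Fin k → ZFSet) (h : ∀ i, xs i ∈ N),
      SatIn N ψ (fun i => ⟨xs i, h i⟩) ↔
        SatIn (clps N '' N) ψ (fun i => ⟨clps N (xs i), Set.mem_image_of_mem _ (h i)⟩) := by
  intro k ψ
  induction ψ with
  | falsum => intro xs h; exact Iff.rfl
  | equal t₁ t₂ =>
    intro xs h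
    obtain ⟨i₁, rfl⟩ := LSet_term_eq t₁
    obtain ⟨i₂, rfl⟩ := LSet_term_eq t₂
    show ((⟨xs i₁, _⟩ : N) = ⟨xs i₂, _⟩) ↔ ((⟨clps N (xs i₁), _⟩ : (clps N '' N : Set ZFSet)) = ⟨clps N (xs i₂), _⟩)
    rw [Subtype.ext_iff, Subtype.ext_iff]
    constructor
    · intro he; exact congrArg (clps N) he
    · intro he; exact clps_inj hext _ (h i₁) _ (h i₂) he
  | @rel k' l R ts =>
    match l, R with
    | 0, R => exact R.elim
    | 1, R => exact R.elim
    | (l+3), R => exact R.elim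
    | 2, R =>
      intro xs h
      obtain ⟨i₁, h₁⟩ := LSet_term_eq (ts 0)
      obtain ⟨i₂, h₂⟩ := LSet_term_eq (ts 1)
      have hts : ts = ![Language.Term.var (Sum.inr i₁), Language.Term.var (Sum.inr i₂)] := by
        funext i
        fin_cases i
        · exact h₁
        · exact h₂
      subst hts
      show xs i₁ ∈ xs i₂ ↔ clps N (xs i₁) ∈ clps N (xs i₂)
      exact (clps_mem_iff hext (h i₂) (h i₁)).symm
  | imp φ₁ φ₂ ih₁ ih₂ =>
    intro xs h
    exact imp_congr (ih₁ xs h) (ih₂ xs h)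
  | @all k φ ih =>
    intro xs h
    show (∀ a : (N : Set ZFSet), _) ↔ (∀ b : (clps N '' N : Set ZFSet), _)
    constructor
    · rintro hall ⟨b, y, hyN, rfl⟩
      have h' : ∀ i, (Fin.snoc xs y : Fin (k+1) → ZFSet) i ∈ N := by
        intro i
        cases i using Fin.lastCases with
        | last => simpa using hyN
        | cast i => simpa using h i
      have := (ih (Fin.snoc xs y) h').1 ?_
      · rw [comp_snoc_subtype (clps N) xs y _
          (fun i => Set.mem_image_of_mem _ (h i)) (Set.mem_image_of_mem _ hyN)] at this
        exact this
      · rw [snoc_subtype N xs y h' h hyN]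
        exact hall ⟨y, hyN⟩
    · intro hall a
      obtain ⟨y, hyN⟩ := a
      have h' : ∀ i, (Fin.snoc xs y : Fin (k+1) → ZFSet) i ∈ N := by
        intro i
        cases i using Fin.lastCases with
        | last => simpa using hyN
        | cast i => simpa using h i
      have := (ih (Fin.snoc xs y) h').2 ?_
      · rw [snoc_subtype N xs y h' h hyN] at this
        exact this
      · rw [comp_snoc_subtype (clps N) xs y _
          (fun i => Set.mem_image_of_mem _ (h i)) (Set.mem_image_of_mem _ hyN)]
        exact hall ⟨clps N y, Set.mem_image_of_mem _ hyN⟩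

/-! ### The auxiliary Skolem language -/

def RB (B : PreStruct) {n : ℕ} (θ : L2.BoundedFormula Empty n) (v : Fin n → ZFSet) : Prop :=
  ∃ hm : ∀ i, v i ∈ B.dom.toSet, SatStruct B θ (fun i => ⟨v i, hm i⟩)

open scoped Classical in
noncomputable def skolB (B : PreStruct) {n : ℕ} (θ : L2.BoundedFormula Empty (n+1))
    (xs : Fin n → ZFSet) : ZFSet :=
  if h : ∃ b, b ∈ B.dom ∧ ¬ RB B θ (Fin.snoc xs b) then h.choose else ∅

open scoped Classical in
noncomputable def dwit (x y : ZFSet) : ZFSet :=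
  if h : ∃ z, (z ∈ x ∧ z ∉ y) ∨ (z ∈ y ∧ z ∉ x) then h.choose else ∅

def extraP : ℕ → Type := fun n => match n with | 2 => Unit | _ => Empty
def extraD : ℕ → Type := fun n => match n with | 2 => Unit | _ => Empty

def laux : FirstOrder.Language :=
  ⟨fun n => L2.BoundedFormula Empty (n+1) ⊕ (extraP n ⊕ extraD n), fun _ => Empty⟩

noncomputable def lauxStr (B : PreStruct) : laux.Structure ZFSet where
  funMap := fun {n} f xs =>
    match f with
    | Sum.inl θ => skolB B θ xs
    | Sum.inr g =>
      match n, g, xs with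
      | 2, Sum.inl _, xs => ({xs 0, xs 1} : ZFSet)
      | 2, Sum.inr _, xs => dwit (xs 0) (xs 1)
      | 0, Sum.inl e, _ => e.elim
      | 1, Sum.inl e, _ => e.elim
      | _+3, Sum.inl e, _ => e.elim
      | 0, Sum.inr e, _ => e.elim
      | 1, Sum.inr e, _ => e.elim
      | _+3, Sum.inr e, _ => e.elim
  RelMap := fun r _ => r.elim

noncomputable def NclB (B : PreStruct) (base : Set ZFSet) : Set ZFSet :=
  letI := lauxStr B
  (FirstOrder.Language.Substructure.closure laux base : Set ZFSet)

theorem NclB_base {B : PreStruct} {base : Set ZFSet} : base ⊆ NclB B base := by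
  letI := lauxStr B
  exact FirstOrder.Language.Substructure.subset_closure

theorem NclB_fun {B : PreStruct} {base : Set ZFSet} {n : ℕ} (f : laux.Functions n)
    (xs : Fin n → ZFSet) (h : ∀ i, xs i ∈ NclB B base) :
    (lauxStr B).funMap f xs ∈ NclB B base := by
  letI := lauxStr B
  exact FirstOrder.Language.Substructure.fun_mem _ f xs h

theorem NclB_pair {B : PreStruct} {base : Set ZFSet} : PairCl (NclB B base) := by
  intro x hx y hy
  have := NclB_fun (B := B) (base := base)
    (Sum.inr (Sum.inl ()) : laux.Functions 2) ![x, y] ?_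
  · exact this
  · intro i; fin_cases i <;> assumption

theorem NclB_ext {B : PreStruct} {base : Set ZFSet} : ExtCl (NclB B base) := by
  intro x hx y hy hne
  have hw : ∃ z, (z ∈ x ∧ z ∉ y) ∨ (z ∈ y ∧ z ∉ x) := by
    by_contra hc
    push_neg at hc
    apply hne
    apply ZFSet.ext
    intro z
    obtain ⟨h1, h2⟩ := hc z
    constructor
    · intro hz; by_contra hzy; tauto
    · intro hz; by_contra hzx; tauto
  have hmem := NclB_fun (B := B) (base := base)
    (Sum.inr (Sum.inr ()) : laux.Functions 2) ![x, y] ?_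
  · have : dwit x y = hw.choose := by
      rw [dwit]; exact dif_pos hw
    refine ⟨dwit x y, hmem, ?_⟩
    rw [this]
    exact hw.choose_spec
  · intro i; fin_cases i <;> assumption

theorem NclB_skol {B : PreStruct} {base : Set ZFSet} {k : ℕ}
    (θ : L2.BoundedFormula Empty (k+1)) (ys : Fin k → ZFSet) (h : ∀ i, ys i ∈ NclB B base)
    (hex : ∃ b, b ∈ B.dom ∧ ¬ RB B θ (Fin.snoc ys b)) :
    ∃ b, b ∈ B.dom ∧ b ∈ NclB B base ∧ ¬ RB B θ (Fin.snoc ys b) := by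
  have hmem := NclB_fun (B := B) (base := base) (Sum.inl θ : laux.Functions k) ys h
  have : (lauxStr B).funMap (Sum.inl θ : laux.Functions k) ys = skolB B θ ys := rfl
  rw [this] at hmem
  have hs : skolB B θ ys = hex.choose := by rw [skolB]; exact dif_pos hex
  refine ⟨skolB B θ ys, ?_, hmem, ?_⟩
  · rw [hs]; exact hex.choose_spec.1
  · rw [hs]; exact hex.choose_spec.2

/-! ### Cardinality of the closure -/

theorem L2_card_le : L2.card ≤ Cardinal.aleph0 := by
  have hf : ∀ n, IsEmpty (L2.Functions n) := fun _ => inferInstanceAs (IsEmpty Empty)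
  have hr : ∀ n, Countable (L2.Relations n) := fun n =>
    match n with
    | 0 => inferInstanceAs (Countable Empty)
    | 1 => inferInstanceAs (Countable Unit)
    | 2 => inferInstanceAs (Countable Unit)
    | (_+3) => inferInstanceAs (Countable Empty)
  have : Countable L2.Symbols := by
    haveI := hf; haveI := hr
    infer_instance
  exact Cardinal.mk_le_aleph0

theorem L2_bf_card_le : Cardinal.mk (Σ n, L2.BoundedFormula Empty n) ≤ Cardinal.aleph0 := by
  refine le_trans (FirstOrder.Language.BoundedFormula.card_le) ?_
  simp only [Cardinal.mk_eq_zero, Cardinal.lift_zero, zero_add, Cardinal.lift_id]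
  exact max_le le_rfl L2_card_le

theorem laux_fun_card_le : Cardinal.mk (Σ n, laux.Functions n) ≤ Cardinal.aleph0 := by
  have e := Cardinal.mk_congr
    (Equiv.sigmaSumDistrib (fun n => L2.BoundedFormula Empty (n+1)) (fun n => extraP n ⊕ extraD n))
  rw [show (Σ n, laux.Functions n) = (Σ n, L2.BoundedFormula Empty (n+1) ⊕ (extraP n ⊕ extraD n)) from rfl, e]
  rw [Cardinal.mk_sum]
  have each : ∀ n, Cardinal.mk (L2.BoundedFormula Empty n) ≤ Cardinal.aleph0 := fun n =>
    le_trans (Cardinal.mk_le_of_injective sigma_mk_injective) L2_bf_card_le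
  have h1 : Cardinal.mk (Σ n, L2.BoundedFormula Empty (n+1)) ≤ Cardinal.aleph0 := by
    rw [Cardinal.mk_sigma]
    refine le_trans (Cardinal.sum_le_sum _ (fun _ => Cardinal.aleph0) (fun n => each (n+1))) ?_
    simp [Cardinal.sum_const']
  have h2 : Cardinal.mk (Σ n, (extraP n ⊕ extraD n)) ≤ Cardinal.aleph0 := by
    have : ∀ n, Countable (extraP n ⊕ extraD n) := fun n =>
      match n with
      | 0 => inferInstanceAs (Countable (Empty ⊕ Empty))
      | 1 => inferInstanceAs (Countable (Empty ⊕ Empty))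
      | 2 => inferInstanceAs (Countable (Unit ⊕ Unit))
      | (_+3) => inferInstanceAs (Countable (Empty ⊕ Empty))
    haveI := this
    exact Cardinal.mk_le_aleph0
  rw [Cardinal.lift_id, Cardinal.lift_id]
  exact le_trans (add_le_add h1 h2) Cardinal.aleph0_add_aleph0.le

theorem mk_NclB_lt (B : PreStruct) (base : Set ZFSet.{0}) (c : Cardinal.{1})
    (h1 : Cardinal.aleph0 < c) (h2 : Cardinal.mk base < c) :
    Cardinal.mk (NclB B base) < c := by
  letI := lauxStr B
  have hle := FirstOrder.Language.Substructure.lift_card_closure_le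
    (L := laux) (M := ZFSet.{0}) (s := base)
  have hfun : Cardinal.lift.{1} (Cardinal.mk (Σ n, laux.Functions n)) ≤ Cardinal.aleph0 := by
    refine le_trans (Cardinal.lift_le.2 laux_fun_card_le) (by simp)
  have : Cardinal.mk (NclB B base) ≤
      max Cardinal.aleph0 (Cardinal.mk base + Cardinal.aleph0) := by
    have := hle.trans (max_le_max le_rfl (add_le_add le_rfl hfun))
    rwa [Cardinal.lift_uzero, Cardinal.lift_uzero] at this
  refine lt_of_le_of_lt this (max_lt h1 ?_)
  exact Cardinal.add_lt_of_lt h1.le h2 h1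

/-! ### Turning a small class into a ZFSet -/

theorem small_of_mk_lt {M : Set ZFSet.{u}} {c : Cardinal.{u}}
    (h : Cardinal.mk M < Cardinal.lift.{u+1} c) : Small.{u} (↥M) := by
  rw [Cardinal.small_iff_lift_mk_lt_univ, Cardinal.lift_id]
  exact h.trans (Cardinal.lift_lt_univ c)

noncomputable def setToZF (M : Set ZFSet.{u}) [Small.{u} (↥M)] : ZFSet.{u} :=
  ZFSet.range (fun y : Shrink (↥M) => (((equivShrink (↥M)).symm y : ↥M) : ZFSet))

theorem toSet_setToZF (M : Set ZFSet.{u}) [Small.{u} (↥M)] : (setToZF M).toSet = M := by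
  ext x
  rw [show x ∈ (setToZF M).toSet ↔ x ∈ setToZF M from Iff.rfl, setToZF, ZFSet.mem_range]
  constructor
  · rintro ⟨y, rfl⟩
    exact (((equivShrink (↥M)).symm y : ↥M)).2
  · intro hx
    exact ⟨equivShrink (↥M) ⟨x, hx⟩, by simp⟩

/-! ### The collapsed structure and the elementary embedding -/

noncomputable def clPre (N : Set ZFSet) (B : PreStruct) : PreStruct :=
  ⟨clps N B.dom, clps N B.rel, clps N B.un⟩

theorem clPre_code {N : Set ZFSet} (hpair : PairCl N) {B : PreStruct}
    (hdom : B.dom ∈ N) (hrel : B.rel ∈ N) (hun : B.un ∈ N) :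
    (clPre N B).code = clps N B.code := by
  show ZFSet.pair (clps N B.dom) (ZFSet.pair (clps N B.rel) (clps N B.un))
    = clps N (ZFSet.pair B.dom (ZFSet.pair B.rel B.un))
  rw [clps_pair hpair hdom (pairN hpair hrel hun), clps_pair hpair hrel hun]

theorem L2_term_eq : ∀ {k : ℕ} (t : L2.Term (Empty ⊕ Fin k)),
    ∃ i : Fin k, t = FirstOrder.Language.Term.var (Sum.inr i) := by
  intro k t
  cases t with
  | var v =>
    cases v with
    | inl e => exact e.elim
    | inr i => exact ⟨i, rfl⟩
  | func f ts => exact f.elim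

theorem RB_iff {B : PreStruct} {k : ℕ} (θ : L2.BoundedFormula Empty k) (v : Fin k → ZFSet)
    (hm : ∀ i, v i ∈ B.dom.toSet) :
    RB B θ v ↔ SatStruct B θ (fun i => ⟨v i, hm i⟩) :=
  ⟨fun h => h.2, fun hs => ⟨hm, hs⟩⟩

section Transfer

variable {N : Set ZFSet} {B : PreStruct}

theorem clps_dom_mem {y : ZFSet} (hy : y ∈ B.dom) (hyN : y ∈ N) :
    clps N y ∈ (clPre N B).dom.toSet :=
  clps_mem_of hy hyN

theorem struct_transfer (hext : ExtCl N) (hpair : PairCl N)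
    (hdom : B.dom ∈ N) (hrel : B.rel ∈ N) (hun : B.un ∈ N)
    (hskol : ∀ {k : ℕ} (θ : L2.BoundedFormula Empty (k+1)) (ys : Fin k → ZFSet),
      (∀ i, ys i ∈ N) → (∃ b, b ∈ B.dom ∧ ¬ RB B θ (Fin.snoc ys b)) →
      ∃ b, b ∈ B.dom ∧ b ∈ N ∧ ¬ RB B θ (Fin.snoc ys b)) :
    ∀ {k : ℕ} (θ : L2.BoundedFormula Empty k) (ys : Fin k → ZFSet)
      (h : ∀ i, ys i ∈ B.dom ∧ ys i ∈ N),
      SatStruct B θ (fun i => ⟨ys i, (h i).1⟩) ↔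
        SatStruct (clPre N B) θ (fun i => ⟨clps N (ys i), clps_dom_mem (h i).1 (h i).2⟩) := by
  intro k θ
  induction θ with
  | falsum => intro ys h; exact Iff.rfl
  | equal t₁ t₂ =>
    intro ys h
    obtain ⟨i₁, rfl⟩ := L2_term_eq t₁
    obtain ⟨i₂, rfl⟩ := L2_term_eq t₂
    show ((⟨ys i₁, _⟩ : ↥B.dom.toSet) = ⟨ys i₂, _⟩)
      ↔ ((⟨clps N (ys i₁), _⟩ : ↥(clPre N B).dom.toSet) = ⟨clps N (ys i₂), _⟩)
    rw [Subtype.ext_iff, Subtype.ext_iff]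
    constructor
    · intro he; exact congrArg (clps N) he
    · intro he; exact clps_inj hext _ (h i₁).2 _ (h i₂).2 he
  | @rel k' l R ts =>
    match l, R with
    | 0, R => exact R.elim
    | (l+3), R => exact R.elim
    | 1, R =>
      intro ys h
      obtain ⟨i₁, h₁⟩ := L2_term_eq (ts 0)
      have hts : ts = ![FirstOrder.Language.Term.var (Sum.inr i₁)] := by
        funext i; fin_cases i; exact h₁
      subst hts
      show ys i₁ ∈ B.un ↔ clps N (ys i₁) ∈ clps N B.un
      constructor
      · intro hmem; exact clps_mem_of hmem (h i₁).2
      · intro hmem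
        obtain ⟨w, hw, hwN, hwe⟩ := mem_clps.1 hmem
        exact clps_inj hext _ hwN _ (h i₁).2 hwe ▸ hw
    | 2, R =>
      intro ys h
      obtain ⟨i₁, h₁⟩ := L2_term_eq (ts 0)
      obtain ⟨i₂, h₂⟩ := L2_term_eq (ts 1)
      have hts : ts = ![FirstOrder.Language.Term.var (Sum.inr i₁),
          FirstOrder.Language.Term.var (Sum.inr i₂)] := by
        funext i; fin_cases i
        · exact h₁
        · exact h₂
      subst hts
      show ZFSet.pair (ys i₁) (ys i₂) ∈ B.rel
        ↔ ZFSet.pair (clps N (ys i₁)) (clps N (ys i₂)) ∈ clps N B.rel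
      have hqN : ZFSet.pair (ys i₁) (ys i₂) ∈ N := pairN hpair (h i₁).2 (h i₂).2
      have hq : clps N (ZFSet.pair (ys i₁) (ys i₂))
          = ZFSet.pair (clps N (ys i₁)) (clps N (ys i₂)) :=
        clps_pair hpair (h i₁).2 (h i₂).2
      constructor
      · intro hmem
        exact hq ▸ clps_mem_of hmem hqN
      · intro hmem
        obtain ⟨w, hw, hwN, hwe⟩ := mem_clps.1 hmem
        have : w = ZFSet.pair (ys i₁) (ys i₂) :=
          clps_inj hext _ hwN _ hqN (hwe.trans hq.symm)
        exact this ▸ hw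
  | imp θ₁ θ₂ ih₁ ih₂ =>
    intro ys h
    exact imp_congr (ih₁ ys h) (ih₂ ys h)
  | @all k θ ih =>
    intro ys h
    show (∀ a : ↥B.dom.toSet, _) ↔ (∀ a : ↥(clPre N B).dom.toSet, _)
    constructor
    · intro hall a
      obtain ⟨av, hav⟩ := a
      obtain ⟨y, hy, hyN, rfl⟩ := mem_clps.1 hav
      have h' : ∀ i, (Fin.snoc ys y : Fin (k+1) → ZFSet) i ∈ B.dom
          ∧ (Fin.snoc ys y : Fin (k+1) → ZFSet) i ∈ N := by
        intro i
        cases i using Fin.lastCases with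
        | last => simpa using ⟨hy, hyN⟩
        | cast i => simpa using h i
      have := (ih (Fin.snoc ys y) h').1 ?_
      · rw [comp_snoc_subtype (S := (clPre N B).dom.toSet) (clps N) ys y _
          (fun i => clps_dom_mem (h i).1 (h i).2) (clps_dom_mem hy hyN)] at this
        exact this
      · rw [snoc_subtype (B.dom.toSet) ys y (fun i => (h' i).1) (fun i => (h i).1) hy]
        exact hall ⟨y, hy⟩
    · intro hall
      by_contra hc
      push_neg at hc
      obtain ⟨⟨b, hb⟩, hnb⟩ := hc
      have hex : ∃ b, b ∈ B.dom ∧ ¬ RB B θ (Fin.snoc ys b) := by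
        refine ⟨b, hb, ?_⟩
        intro hRB
        apply hnb
        have h'' : ∀ i, (Fin.snoc ys b : Fin (k+1) → ZFSet) i ∈ B.dom.toSet := by
          intro i
          cases i using Fin.lastCases with
          | last => simpa using hb
          | cast i => simpa using (show ys i ∈ B.dom.toSet from (h i).1)
        have := (RB_iff θ _ h'').1 hRB
        rwa [snoc_subtype (B.dom.toSet) ys b h'' (fun i => (h i).1) hb] at this
      obtain ⟨b', hb', hb'N, hnRB⟩ := hskol θ ys (fun i => (h i).2) hex
      apply hnRB
      have h' : ∀ i, (Fin.snoc ys b' : Fin (k+1) → ZFSet) i ∈ B.dom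
          ∧ (Fin.snoc ys b' : Fin (k+1) → ZFSet) i ∈ N := by
        intro i
        cases i using Fin.lastCases with
        | last => simpa using ⟨hb', hb'N⟩
        | cast i => simpa using h i
      have hsat := (ih (Fin.snoc ys b') h').2 ?_
      · exact (RB_iff θ _ (fun i => (h' i).1)).2 hsat
      · rw [comp_snoc_subtype (S := (clPre N B).dom.toSet) (clps N) ys b' _
          (fun i => clps_dom_mem (h i).1 (h i).2) (clps_dom_mem hb' hb'N)]
        exact hall ⟨clps N b', clps_dom_mem hb' hb'N⟩

end Transfer

open scoped Classical in
noncomputable def embOf (N : Set ZFSet) (B : PreStruct) (z : ZFSet) : ZFSet :=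
  if h : ∃ y, (y ∈ B.dom ∧ y ∈ N) ∧ clps N y = z then h.choose else ∅

theorem embOf_spec {N : Set ZFSet} {B : PreStruct} {z : ZFSet}
    (hc : ∃ y, (y ∈ B.dom ∧ y ∈ N) ∧ clps N y = z) :
    (embOf N B z ∈ B.dom ∧ embOf N B z ∈ N) ∧ clps N (embOf N B z) = z := by
  have he : embOf N B z = hc.choose := by rw [embOf]; exact dif_pos hc
  rw [he]
  exact hc.choose_spec

theorem embOf_structEmb {N : Set ZFSet} {B : PreStruct} (hext : ExtCl N) (hpair : PairCl N)
    (hdom : B.dom ∈ N) (hrel : B.rel ∈ N) (hun : B.un ∈ N)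
    (hskol : ∀ {k : ℕ} (θ : L2.BoundedFormula Empty (k+1)) (ys : Fin k → ZFSet),
      (∀ i, ys i ∈ N) → (∃ b, b ∈ B.dom ∧ ¬ RB B θ (Fin.snoc ys b)) →
      ∃ b, b ∈ B.dom ∧ b ∈ N ∧ ¬ RB B θ (Fin.snoc ys b)) :
    StructEmb (clPre N B) B (embOf N B) := by
  have hcond : ∀ z, z ∈ (clPre N B).dom → ∃ y, (y ∈ B.dom ∧ y ∈ N) ∧ clps N y = z := by
    intro z hz
    obtain ⟨y, hy, hyN, hye⟩ := mem_clps.1 hz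
    exact ⟨y, ⟨hy, hyN⟩, hye⟩
  have maps : ∀ x ∈ (clPre N B).dom, embOf N B x ∈ B.dom := by
    intro x hx
    exact (embOf_spec (hcond x hx)).1.1
  refine ⟨maps, ?_⟩
  intro k θ xs h
  have hy : ∀ i, (embOf N B (xs i) ∈ B.dom ∧ embOf N B (xs i) ∈ N)
      ∧ clps N (embOf N B (xs i)) = xs i := fun i => embOf_spec (hcond _ (h i))
  have := struct_transfer hext hpair hdom hrel hun @hskol θ (fun i => embOf N B (xs i))
    (fun i => (hy i).1)
  have e1 : (fun i => (⟨clps N (embOf N B (xs i)),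
      clps_dom_mem ((hy i).1).1 ((hy i).1).2⟩ : ↥(clPre N B).dom.toSet))
      = (fun i => ⟨xs i, h i⟩) := by
    funext i
    exact Subtype.ext ((hy i).2)
  rw [e1] at this
  exact this.symm

/-- If `κ` is an uncountable cardinal, every Σ₁-definable (with parameters in
`H_κ`) class of structures of the same type reflects below `κ`. -/
theorem stmt16 (κ : Cardinal) (hκ : Cardinal.aleph0 < κ)
    (𝒞 : Set ZFSet) (hstr : ∀ X ∈ 𝒞, ∃ A : PreStruct, X = A.code)
    (φ : LSet.BoundedFormula Empty 2) (hφ : IsSigmaFml 1 φ)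
    (p : ZFSet) (hp : p ∈ Hset κ)
    (hdef : ∀ X : ZFSet, X ∈ 𝒞 ↔ SatV φ ![X, p]) :
    ∀ B : PreStruct, B.code ∈ 𝒞 →
      ∃ A : PreStruct, A.code ∈ 𝒞 ∧ A.code ∈ Hset κ ∧ ElemEmbeddable A B := by
  intro B hB
  obtain ⟨t, htr, hpt, hct⟩ := hp
  have hBV : SatV φ ![B.code, p] := (hdef _).1 hB
  obtain ⟨l, hl⟩ := sigma1_down hφ ![B.code, p] hBV
  set rest : Set ZFSet :=
    insert p (insert B.dom (insert B.rel (insert B.un {y | y ∈ l}))) with hrest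
  set base : Set ZFSet := t.toSet ∪ rest with hbase
  set N : Set ZFSet := NclB B base with hN
  have hbaseN : base ⊆ N := NclB_base
  have hext : ExtCl N := NclB_ext
  have hpair : PairCl N := NclB_pair
  -- memberships
  have htN : t.toSet ⊆ N := fun x hx => hbaseN (Or.inl hx)
  have hpN : p ∈ N := hbaseN (Or.inr (by simp [hrest]))
  have hdomN : B.dom ∈ N := hbaseN (Or.inr (by simp [hrest]))
  have hrelN : B.rel ∈ N := hbaseN (Or.inr (by simp [hrest]))
  have hunN : B.un ∈ N := hbaseN (Or.inr (by simp [hrest]))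
  have hlN : ∀ y ∈ l, y ∈ N := fun y hy => hbaseN (Or.inr (by simp [hrest]; tauto))
  have hcodeN : B.code ∈ N := pairN hpair hdomN (pairN hpair hrelN hunN)
  -- the collapse
  have hxs : ∀ i : Fin 2, (![B.code, p] : Fin 2 → ZFSet) i ∈ N := by
    intro i; fin_cases i
    · exact hcodeN
    · exact hpN
  have step1 : SatIn N φ (fun i => ⟨![B.code, p] i, hxs i⟩) := hl N hlN hxs
  have step2 := (clps_realize hext φ ![B.code, p] hxs).1 step1
  have step3 := sigma1_up (clps N '' N) hφ _ step2
  have hclp : clps N p = p := clps_fix htr htN p hpt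
  have hcodeA : (clPre N B).code = clps N B.code := clPre_code hpair hdomN hrelN hunN
  have step4 : SatV φ ![(clPre N B).code, p] := by
    have he : (fun i => ((fun i => (⟨clps N (![B.code, p] i), Set.mem_image_of_mem _ (hxs i)⟩
        : ↥(clps N '' N))) i : ZFSet)) = ![(clPre N B).code, p] := by
      funext i
      fin_cases i
      · simpa using hcodeA.symm
      · simpa using hclp
    rwa [he] at step3
  have hAC : (clPre N B).code ∈ 𝒞 := (hdef _).2 step4
  -- cardinality of N and the transitive hull
  have haleph : Cardinal.aleph0 < Cardinal.lift.{1} κ := by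
    have := Cardinal.lift_lt.2 hκ
    rwa [Cardinal.lift_aleph0] at this
  have hbasec : Cardinal.mk base < Cardinal.lift.{1} κ := by
    refine lt_of_le_of_lt (Cardinal.mk_union_le _ _) ?_
    refine Cardinal.add_lt_of_lt haleph.le hct ?_
    refine lt_of_le_of_lt ?_ haleph
    have : (rest : Set ZFSet).Countable := by
      refine Set.Countable.insert _ (Set.Countable.insert _ (Set.Countable.insert _
        (Set.Countable.insert _ ?_)))
      exact (l.finite_toSet).countable
    haveI := this.to_subtype
    exact Cardinal.mk_le_aleph0
  have hNc : Cardinal.mk N < Cardinal.lift.{1} κ := mk_NclB_lt B base _ haleph hbasec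
  have hMc : Cardinal.mk (clps N '' N) < Cardinal.lift.{1} κ :=
    lt_of_le_of_lt (Cardinal.mk_image_le) hNc
  haveI : Small.{0} (↥(clps N '' N)) := small_of_mk_lt hMc
  set Mhat : ZFSet := setToZF (clps N '' N) with hMhat
  have hMhatToSet : Mhat.toSet = clps N '' N := toSet_setToZF _
  have hmemMhat : ∀ z, z ∈ Mhat ↔ z ∈ clps N '' N := by
    intro z
    rw [show z ∈ Mhat ↔ z ∈ Mhat.toSet from Iff.rfl, hMhatToSet]
  have hMtrans : Mhat.IsTransitive := by
    intro y hy z hz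
    rw [hmemMhat] at hy ⊢
    exact clps_transCl N y hy z hz
  have hHset : (clPre N B).code ∈ Hset κ := by
    refine ⟨Mhat, hMtrans, ?_, ?_⟩
    · intro z hz
      rw [hmemMhat]
      refine clps_transCl N (clps N B.code) (Set.mem_image_of_mem _ hcodeN) z ?_
      rwa [← hcodeA]
    · rw [hMhatToSet]
      exact hMc
  refine ⟨clPre N B, hAC, hHset, ?_⟩
  exact ⟨embOf N B, embOf_structEmb hext hpair hdomN hrelN hunN
    (fun θ ys hys hex => NclB_skol θ ys hys hex)⟩
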